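/- The sublattice of ℤ^{1,14} (the odd unimodular lattice of signature (1,14) with basis h,e₁,…,e₁₄) spanned by u₁ = e₉−e₁₀, u₂ = e₁₀−e₁₁, u₃ = e₁₁−e₁₂, u₄ = e₁₂−e₁₃, u₅ = e₁₃−e₁₄, u₆ = 7h−3e₁−2e₂−⋯−2e₁₃−e₁₄ is a primitive sublattice of rank 6. -/

import Mathlib

/-- The class `u₆ = 7h - 3e₁ - 2e₂ - ⋯ - 2e₁₃ - e₁₄` in `ℤ^{1,14}`
(coordinate `0` is `h`, coordinate `i` is `eᵢ`). -/
def u₆ : Fin 15 → ℤ :=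
  ![7, -3, -2, -2, -2, -2, -2, -2, -2, -2, -2, -2, -2, -2, -1]

/-- The classes `u₁ = e₉ - e₁₀, …, u₅ = e₁₃ - e₁₄`, and `u₆` as above. -/
def u : Fin 6 → Fin 15 → ℤ := fun i =>
  if h : i.val < 5 then
    Pi.single (⟨9 + i.val, by omega⟩ : Fin 15) 1
      - Pi.single (⟨10 + i.val, by omega⟩ : Fin 15) 1
  else u₆

def A : Fin 6 → Fin 15 → ℤ := fun i =>
  ![![0,9,-9,0,0,0,0,0,0,0,-1,-1,-1,-1,-1],
    ![0,7,-7,0,0,0,0,0,0,0,0,-1,-1,-1,-1],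
    ![0,5,-5,0,0,0,0,0,0,0,0,0,-1,-1,-1],
    ![0,3,-3,0,0,0,0,0,0,0,0,0,0,-1,-1],
    ![0,1,-1,0,0,0,0,0,0,0,0,0,0,0,-1],
    ![0,-1,1,0,0,0,0,0,0,0,0,0,0,0,0]] i

def π : (Fin 15 → ℤ) →ₗ[ℤ] (Fin 6 → ℤ) where
  toFun x := fun i => ∑ j, A i j * x j
  map_add' x y := by
    funext i; simp only [Pi.add_apply, mul_add, Finset.sum_add_distrib]
  map_smul' c x := by
    funext i
    simp only [Pi.smul_apply, smul_eq_mul, RingHom.id_apply, Finset.mul_sum]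
    exact Finset.sum_congr rfl fun j _ => by ring

lemma hπu : ∀ i, π (u i) = Pi.single i 1 := by decide

def f : (Fin 6 → ℤ) →ₗ[ℤ] (Fin 15 → ℤ) := Fintype.linearCombination ℤ u

lemma hπf : ∀ c, π (f c) = c := by
  intro c
  have : f c = ∑ i, c i • u i := by
    simp [f, Fintype.linearCombination_apply]
  rw [this, map_sum]
  simp only [map_smul, hπu]
  funext j
  simp [Finset.sum_apply, Pi.single_apply]

lemma hrange : LinearMap.range f = Submodule.span ℤ (Set.range u) :=
  Fintype.range_linearCombination ..

lemma hf_inj : Function.Injective f := fun a b h => by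
  have := congrArg π h; simpa [hπf] using this

/-- The sublattice of `ℤ^{1,14}` spanned by `u₁, …, u₆` is a primitive
sublattice of rank `6` (primitive: the quotient is torsion-free, i.e.
if a nonzero multiple of `x` lies in the sublattice then so does `x`). -/
theorem stmt5 :
    Module.finrank ℤ (Submodule.span ℤ (Set.range u)) = 6 ∧
    ∀ (x : Fin 15 → ℤ) (n : ℤ), n ≠ 0 →
      n • x ∈ Submodule.span ℤ (Set.range u) →
      x ∈ Submodule.span ℤ (Set.range u) := by
  constructor
  · rw [← hrange]
    rw [← (LinearEquiv.ofInjective f hf_inj).finrank_eq]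
    simp [Module.finrank_pi]
  · intro x n hn hmem
    rw [← hrange] at hmem ⊢
    obtain ⟨c, hc⟩ := hmem
    have h1 : c = n • π x := by
      have := congrArg π hc
      rw [hπf, map_smul] at this
      exact this
    have h2 : f (π x) = x := by
      apply smul_right_injective (Fin 15 → ℤ) hn
      show n • f (π x) = n • x; rw [← map_smul, ← h1, hc]
    exact ⟨π x, h2⟩
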